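/- arXiv:1106.2068 — 4 statements merged into one kernel-verified Lean document; each statement's English description precedes it below -/
import Mathlib

section
/- (Lemma 3) Assume (A1) and (B3), and let α ∈ (0,1). Then B · c(α) ≤ Σ_{b=1}^B π_b(c(α)) ≤ log(1/(1−α)). -/
open scoped ENNReal

noncomputable section

/-- A multiple-testing framework with `m` hypotheses: data space `Ω` with distribution `Q`,
`p`-values `p j` taking values in the finite set `S ⊆ [0,1]`, set of true nulls `I`,
a finite group `G` of measurable bijections of the data space, and a partition
`A 1, …, A B` of the hypotheses into blocks, each containing a true null. -/
structure Framework (m : ℕ) where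
  Ω : Type
  [meas : MeasurableSpace Ω]
  Q : MeasureTheory.Measure Ω
  Qprob : MeasureTheory.IsProbabilityMeasure Q
  S : Finset ℝ
  hS : ∀ s ∈ S, 0 ≤ s ∧ s ≤ 1
  p : Fin m → Ω → ℝ
  p_meas : ∀ j, Measurable (p j)
  p_mem : ∀ j w, p j w ∈ S
  I : Finset (Fin m)
  G : Finset (Ω ≃ᵐ Ω)
  G_one : MeasurableEquiv.refl Ω ∈ G
  G_mul : ∀ g ∈ G, ∀ g' ∈ G, g.trans g' ∈ G
  G_inv : ∀ g ∈ G, g.symm ∈ G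
  B : ℕ
  B_pos : 0 < B
  A : Fin B → Finset (Fin m)
  A_disj : ∀ b b', b ≠ b' → Disjoint (A b) (A b')
  A_cover : ∀ j, ∃ b, j ∈ A b
  A_I : ∀ b, (A b ∩ I).Nonempty

attribute [instance] Framework.meas Framework.Qprob

open MeasureTheory ProbabilityTheory Filter

namespace Framework

variable {m : ℕ} (F : Framework m)

/-- Minimum of the `p`-values over the index set `J` (`1` by convention if `J = ∅`). -/
def fmin (J : Finset (Fin m)) (w : F.Ω) : ℝ :=
  if h : J.Nonempty then J.inf' h (fun j => F.p j w) else 1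

/-- `min_{j ∈ I} p_j(w)`, the minimal `p`-value over the true null hypotheses. -/
def nullMin : F.Ω → ℝ := F.fmin F.I

/-- `min_{1 ≤ j ≤ m} p_j(w)`, the minimal `p`-value over all hypotheses. -/
def fullMin : F.Ω → ℝ := F.fmin Finset.univ

/-- `p^(b)(w) = min_{j ∈ A_b ∩ I} p_j(w)`, the minimal null `p`-value in block `b`. -/
def blockMin (b : Fin F.B) : F.Ω → ℝ := F.fmin (F.A b ∩ F.I)

/-- The permutation probability `P*(E)(w) = |G|⁻¹ ∑_{g ∈ G} 1{g w ∈ E}`. -/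
def Pstar (E : Set F.Ω) (w : F.Ω) : ℝ :=
  (F.G.card : ℝ)⁻¹ * ∑ g ∈ F.G, E.indicator (fun _ => (1 : ℝ)) (g w)

/-- The oracle threshold `c(α) = max {s ∈ S : Q(min_{j ∈ I} p_j(W) ≤ s) ≤ α}`,
with `max ∅ := 0`. -/
def oracle (α : ℝ) : ℝ :=
  WithBot.unbotD 0 ((F.S.filter (fun s => (F.Q {w | F.nullMin w ≤ s}).toReal ≤ α)).max)

/-- The single-step Westfall--Young threshold
`ĉ(α)(w) = max {s ∈ S : P*(min_{1≤j≤m} p_j(W) ≤ s)(w) ≤ α}`, with `max ∅ := 0`. -/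
def wy (α : ℝ) (w : F.Ω) : ℝ :=
  WithBot.unbotD 0 ((F.S.filter (fun s => F.Pstar {w' | F.fullMin w' ≤ s} w ≤ α)).max)

/-- The maximal block size `m_B = max_b |A_b|`. -/
def mB : ℕ := Finset.univ.sup (fun b : Fin F.B => (F.A b).card)

/-- `π_b(c) = Q(p^(b)(W) ≤ c)`. -/
def piB (b : Fin F.B) (c : ℝ) : ℝ := (F.Q {w | F.blockMin b w ≤ c}).toReal

/-- Assumption (A1): for every pair `g, g' ∈ G`, the random variables
`min (p^(b)(gW)) (p^(b)(g'W))`, `b = 1, …, B`, are mutually independent under `Q`. -/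
def A1 : Prop :=
  ∀ g ∈ F.G, ∀ g' ∈ F.G,
    iIndepFun (β := fun _ : Fin F.B => ℝ)
      (fun b : Fin F.B => fun w => min (F.blockMin b (g w)) (F.blockMin b (g' w))) F.Q

/-- Assumption (B1): for `G` uniformly distributed on the permutation group and independent
of `W`, the joint distribution of `(p_j(GW))_{j ∈ I}` equals that of `(p_j(W))_{j ∈ I}`;
expressed as an equality between the uniform mixture of the pushforwards and the
pushforward of `Q` itself. -/
def B1 : Prop :=
  (F.G.card : ℝ≥0∞)⁻¹ •
      (∑ g ∈ F.G, Measure.map (fun w => fun j : F.I => F.p j (g w)) F.Q)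
    = Measure.map (fun w => fun j : F.I => F.p j w) F.Q

/-- Assumption (B2) with constant `r`:
`r⁻¹ s ≤ P*(p_j(W) ≤ s)(w) ≤ r s` for all `j`, all `s ∈ S` and all `w`. -/
def B2 (r : ℝ) : Prop :=
  ∀ j : Fin m, ∀ s ∈ F.S, ∀ w : F.Ω,
    r⁻¹ * s ≤ F.Pstar {w' | F.p j w' ≤ s} w ∧ F.Pstar {w' | F.p j w' ≤ s} w ≤ r * s

/-- Assumption (B3): null `p`-values are uniformly distributed on `S`:
`Q(p_j(W) ≤ s) = s` for all `j ∈ I`, `s ∈ S`. -/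
def B3 : Prop :=
  ∀ j ∈ F.I, ∀ s ∈ F.S, (F.Q {w | F.p j w ≤ s}).toReal = s

end Framework


private lemma measurable_finset_inf' {Ω ι : Type*} [MeasurableSpace Ω]
    {J : Finset ι} (h : J.Nonempty) (f : ι → Ω → ℝ) (hf : ∀ j, Measurable (f j)) :
    Measurable (fun w => J.inf' h (fun j => f j w)) := by
  induction h using Finset.Nonempty.cons_induction with
  | singleton a => simpa using hf a
  | cons a s ha hs ih =>
      have : (fun w => (Finset.cons a s ha).inf' (Finset.cons_nonempty ha) (fun j => f j w))
          = fun w => min (f a w) (s.inf' hs (fun j => f j w)) := by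
        funext w; rw [Finset.inf'_cons]
      rw [this]
      exact (hf a).min ih

/-- **Lemma 3.** Under (A1) and (B3), for `α ∈ (0,1)`:
`B·c(α) ≤ ∑_{b=1}^B π_b(c(α)) ≤ log(1/(1−α))`. -/
theorem lemma3_sum_block_probabilities
    {m : ℕ} (F : Framework m) (hA1 : F.A1) (hB3 : F.B3)
    (α : ℝ) (hα : α ∈ Set.Ioo (0 : ℝ) 1) :
    (F.B : ℝ) * F.oracle α ≤ ∑ b : Fin F.B, F.piB b (F.oracle α) ∧
    ∑ b : Fin F.B, F.piB b (F.oracle α) ≤ Real.log (1 / (1 - α)) := by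
  obtain ⟨hα0, hα1⟩ := hα
  haveI : IsProbabilityMeasure F.Q := F.Qprob
  set c := F.oracle α with hc
  have hAI : ∀ b : Fin F.B, (F.A b ∩ F.I).Nonempty := F.A_I
  have hI : F.I.Nonempty := by
    obtain ⟨j, hj⟩ := hAI ⟨0, F.B_pos⟩
    exact ⟨j, (Finset.mem_inter.mp hj).2⟩
  have hbmeq : ∀ b : Fin F.B,
      F.blockMin b = fun w => (F.A b ∩ F.I).inf' (hAI b) (fun j => F.p j w) := by
    intro b; funext w
    simp [Framework.blockMin, Framework.fmin, hAI b]
  have hnm : F.nullMin = fun w => F.I.inf' hI (fun j => F.p j w) := by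
    funext w; simp [Framework.nullMin, Framework.fmin, hI]
  have hbm : ∀ b, Measurable (F.blockMin b) := by
    intro b; rw [hbmeq b]; exact measurable_finset_inf' _ _ F.p_meas
  have hmeasB : ∀ b : Fin F.B, MeasurableSet {w | F.blockMin b w ≤ c} := by
    intro b
    exact (hbm b) measurableSet_Iic
  have hnmMeas : Measurable F.nullMin := by
    rw [hnm]; exact measurable_finset_inf' _ _ F.p_meas
  have hmeasN : MeasurableSet {w | F.nullMin w ≤ c} := hnmMeas measurableSet_Iic
  -- facts about π_b
  have hπ0 : ∀ b, 0 ≤ F.piB b c := fun b => ENNReal.toReal_nonneg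
  have hπ1 : ∀ b, F.piB b c ≤ 1 := by
    intro b
    have := ENNReal.toReal_mono (a := F.Q {w | F.blockMin b w ≤ c}) (measure_ne_top F.Q Set.univ)
      (measure_mono (Set.subset_univ _))
    simpa [Framework.piB] using this
  -- the oracle threshold: case analysis
  have hc_cases : c = 0 ∨ (c ∈ F.S ∧ (F.Q {w | F.nullMin w ≤ c}).toReal ≤ α) := by
    rcases hmax : (F.S.filter fun s => (F.Q {w | F.nullMin w ≤ s}).toReal ≤ α).max with _ | a
    · left
      show F.oracle α = 0
      unfold Framework.oracle
      rw [hmax]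
      rfl
    · right
      have ha := Finset.mem_of_max hmax
      have hca : c = a := by
        show F.oracle α = a
        unfold Framework.oracle
        rw [hmax]
        rfl
      rw [hca]
      exact ⟨(Finset.mem_filter.mp ha).1, (Finset.mem_filter.mp ha).2⟩
  -- Q(nullMin ≤ 0) = 0
  have hQ0 : F.Q {w | F.nullMin w ≤ 0} = 0 := by
    have hsub : {w | F.nullMin w ≤ 0} ⊆ ⋃ j ∈ (F.I : Set (Fin m)), {w | F.p j w ≤ 0} := by
      intro w hw
      rw [Set.mem_setOf_eq, hnm] at hw
      obtain ⟨j, hj, hjle⟩ := (Finset.inf'_le_iff hI).1 hw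
      exact Set.mem_biUnion hj hjle
    refine measure_mono_null hsub ?_
    refine (measure_biUnion_null_iff F.I.countable_toSet).2 ?_
    intro j hj
    by_cases h0 : (0:ℝ) ∈ F.S
    · have h := hB3 j hj 0 h0
      rcases (ENNReal.toReal_eq_zero_iff _).1 h with h' | h'
      · exact h'
      · exact absurd h' (measure_ne_top _ _)
    · have hempty : {w | F.p j w ≤ 0} = ∅ := by
        ext w
        simp only [Set.mem_setOf_eq, Set.mem_empty_iff_false, iff_false, not_le]
        rcases lt_or_eq_of_le (F.hS _ (F.p_mem j w)).1 with h | h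
        · exact h
        · exact absurd (h ▸ F.p_mem j w) h0
      simp [hempty]
  have hQc : (F.Q {w | F.nullMin w ≤ c}).toReal ≤ α := by
    rcases hc_cases with h | h
    · rw [h, hQ0]; simpa using le_of_lt hα0
    · exact h.2
  -- Lower bound
  have hlb : (F.B : ℝ) * c ≤ ∑ b : Fin F.B, F.piB b c := by
    rcases hc_cases with h | h
    · rw [h, mul_zero]
      exact Finset.sum_nonneg fun b _ => ENNReal.toReal_nonneg
    · have hb : ∀ b : Fin F.B, c ≤ F.piB b c := by
        intro b
        obtain ⟨j, hj⟩ := hAI b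
        have hjI : j ∈ F.I := (Finset.mem_inter.mp hj).2
        have hsub : {w | F.p j w ≤ c} ⊆ {w | F.blockMin b w ≤ c} := by
          intro w hw
          have hle : F.blockMin b w ≤ F.p j w := by
            rw [hbmeq b]; exact Finset.inf'_le _ hj
          exact le_trans hle hw
        calc c = (F.Q {w | F.p j w ≤ c}).toReal := (hB3 j hjI c h.1).symm
          _ ≤ F.piB b c := ENNReal.toReal_mono (measure_ne_top _ _) (measure_mono hsub)
      calc (F.B : ℝ) * c = ∑ _b : Fin F.B, c := by
            rw [Finset.sum_const, Finset.card_univ, Fintype.card_fin, nsmul_eq_mul]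
        _ ≤ ∑ b : Fin F.B, F.piB b c := Finset.sum_le_sum fun b _ => hb b
  -- Upper bound
  -- independence of the blockMins from (A1) with g = g' = id
  have hid := hA1 (MeasurableEquiv.refl F.Ω) F.G_one (MeasurableEquiv.refl F.Ω) F.G_one
  have hfun : (fun b : Fin F.B => fun w =>
        min (F.blockMin b ((MeasurableEquiv.refl F.Ω) w)) (F.blockMin b ((MeasurableEquiv.refl F.Ω) w)))
      = fun b => F.blockMin b := by
    funext b w; simp
  rw [hfun] at hid
  have hprod := hid.measure_inter_preimage_eq_mul Finset.univ
    (sets := fun _ => Set.Ioi c) (fun i _ => measurableSet_Ioi)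
  have hset : (⋂ b ∈ Finset.univ, F.blockMin b ⁻¹' Set.Ioi c) = {w | F.nullMin w ≤ c}ᶜ := by
    ext w
    simp only [Finset.mem_univ, Set.iInter_true, Set.mem_iInter, Set.mem_preimage,
      Set.mem_Ioi, Set.mem_compl_iff, Set.mem_setOf_eq, not_le]
    constructor
    · intro h
      rw [hnm]
      refine (Finset.lt_inf'_iff _).2 fun j hj => ?_
      obtain ⟨b, hb⟩ := F.A_cover j
      have hb' := h b
      rw [hbmeq b] at hb'
      exact (Finset.lt_inf'_iff _).1 hb' j (Finset.mem_inter.mpr ⟨hb, hj⟩)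
    · intro h b
      rw [hbmeq b]
      refine (Finset.lt_inf'_iff _).2 fun j hj => ?_
      rw [hnm] at h
      exact (Finset.lt_inf'_iff _).1 h j (Finset.mem_inter.mp hj).2
  have hcompl : ∀ (s : Set F.Ω), MeasurableSet s → (F.Q sᶜ).toReal = 1 - (F.Q s).toReal := by
    intro s hs
    have h1 : F.Q s + F.Q sᶜ = 1 := by
      rw [measure_add_measure_compl hs, measure_univ]
    have h2 := congrArg ENNReal.toReal h1
    rw [ENNReal.toReal_add (measure_ne_top _ _) (measure_ne_top _ _), ENNReal.toReal_one] at h2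
    linarith
  have hBpre : ∀ b : Fin F.B, F.blockMin b ⁻¹' Set.Ioi c = {w | F.blockMin b w ≤ c}ᶜ := by
    intro b; ext w
    simp [Set.mem_preimage, Set.mem_Ioi, not_le]
  have hkey : ∏ b : Fin F.B, (1 - F.piB b c) = 1 - (F.Q {w | F.nullMin w ≤ c}).toReal := by
    have h1 : (F.Q (⋂ b ∈ Finset.univ, F.blockMin b ⁻¹' Set.Ioi c)).toReal
        = ∏ b : Fin F.B, (F.Q (F.blockMin b ⁻¹' Set.Ioi c)).toReal := by
      rw [hprod, ENNReal.toReal_prod]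
    rw [hset, hcompl _ hmeasN] at h1
    rw [h1]
    refine Finset.prod_congr rfl fun b _ => ?_
    rw [hBpre b, hcompl _ (hmeasB b)]
    rfl
  have hprod_ge : 1 - α ≤ ∏ b : Fin F.B, (1 - F.piB b c) := by
    rw [hkey]; linarith
  have hprod_le : ∏ b : Fin F.B, (1 - F.piB b c)
      ≤ Real.exp (-(∑ b : Fin F.B, F.piB b c)) := by
    have h1 : ∏ b : Fin F.B, (1 - F.piB b c) ≤ ∏ b : Fin F.B, Real.exp (-(F.piB b c)) := by
      refine Finset.prod_le_prod (fun b _ => by linarith [hπ1 b]) fun b _ => ?_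
      have := Real.add_one_le_exp (-(F.piB b c))
      linarith
    have h2 : ∏ b : Fin F.B, Real.exp (-(F.piB b c))
        = Real.exp (-(∑ b : Fin F.B, F.piB b c)) := by
      rw [← Real.exp_sum, Finset.sum_neg_distrib]
    rw [← h2]; exact h1
  have hub : ∑ b : Fin F.B, F.piB b c ≤ Real.log (1 / (1 - α)) := by
    have hpos : (0:ℝ) < 1 - α := by linarith
    have h3 : 1 - α ≤ Real.exp (-(∑ b : Fin F.B, F.piB b c)) := le_trans hprod_ge hprod_le
    have h4 := (Real.log_le_log_iff hpos (Real.exp_pos _)).2 h3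
    rw [Real.log_exp] at h4
    rw [one_div, Real.log_inv]
    linarith
  exact ⟨hlb, hub⟩
end
end

section
/- (Constrained maximization of the sum of block probabilities) Let α ∈ (0,1) and let π₁, …, π_B be real numbers in [0,1] satisfying 1 − ∏_{b=1}^B (1 − π_b) ≤ α. Then Σ_{b=1}^B π_b ≤ B (1 − (1−α)^{1/B}), and consequently Σ_{b=1}^B π_b ≤ log(1/(1−α)). -/
/-- **Constrained maximization of the sum of block probabilities.** If
`π₁,…,π_B ∈ [0,1]` satisfy `1 − ∏ (1 − π_b) ≤ α` with `α ∈ (0,1)`, then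
`∑ π_b ≤ B(1 − (1−α)^{1/B})`, and consequently `∑ π_b ≤ log(1/(1−α))`. -/
theorem constrained_max_sum_block_probs
    {B : ℕ} (hB : 0 < B) (α : ℝ) (hα : α ∈ Set.Ioo (0 : ℝ) 1)
    (π : Fin B → ℝ) (hπ : ∀ b, π b ∈ Set.Icc (0 : ℝ) 1)
    (hcon : 1 - ∏ b, (1 - π b) ≤ α) :
    ∑ b, π b ≤ (B : ℝ) * (1 - (1 - α) ^ ((B : ℝ)⁻¹)) ∧
    ∑ b, π b ≤ Real.log (1 / (1 - α)) := by
  obtain ⟨hα0, hα1⟩ := hα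
  have hBpos : (0 : ℝ) < B := Nat.cast_pos.mpr hB
  have hz : ∀ b : Fin B, 0 ≤ 1 - π b := fun b => by
    have := (hπ b).2; linarith
  have hprod : 1 - α ≤ ∏ b, (1 - π b) := by linarith
  have h1α : (0 : ℝ) < 1 - α := by linarith
  have hprodpos : 0 ≤ ∏ b, (1 - π b) := Finset.prod_nonneg fun b _ => hz b
  -- AM-GM step
  have hw : ∑ _b : Fin B, (B : ℝ)⁻¹ = 1 := by
    simp [Finset.sum_const, mul_inv_cancel₀ hBpos.ne']
  have key : (∏ b, (1 - π b)) ^ ((B : ℝ)⁻¹) ≤ ∑ b : Fin B, (B : ℝ)⁻¹ * (1 - π b) := by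
    have := Real.geom_mean_le_arith_mean_weighted Finset.univ
      (fun _ => (B : ℝ)⁻¹) (fun b => 1 - π b)
      (fun _ _ => by positivity) hw (fun b _ => hz b)
    calc (∏ b, (1 - π b)) ^ ((B : ℝ)⁻¹)
        = ∏ b, (1 - π b) ^ ((B : ℝ)⁻¹) := by
          rw [← Real.finset_prod_rpow _ _ (fun b _ => hz b)]
      _ ≤ _ := this
  have key2 : (1 - α) ^ ((B : ℝ)⁻¹) ≤ 1 - (∑ b, π b) / B := by
    have h1 : (1 - α) ^ ((B : ℝ)⁻¹) ≤ (∏ b, (1 - π b)) ^ ((B : ℝ)⁻¹) :=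
      Real.rpow_le_rpow h1α.le hprod (by positivity)
    have h2 : ∑ b : Fin B, (B : ℝ)⁻¹ * (1 - π b) = 1 - (∑ b, π b) / B := by
      rw [← Finset.mul_sum, Finset.sum_sub_distrib]
      simp [Finset.sum_const]
      field_simp
    calc (1 - α) ^ ((B : ℝ)⁻¹) ≤ _ := h1
      _ ≤ _ := key
      _ = _ := h2
  have first : ∑ b, π b ≤ (B : ℝ) * (1 - (1 - α) ^ ((B : ℝ)⁻¹)) := by
    have := mul_le_mul_of_nonneg_left (by linarith : (∑ b, π b) / B ≤ 1 - (1 - α) ^ ((B : ℝ)⁻¹)) hBpos.le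
    rwa [mul_div_cancel₀ _ hBpos.ne'] at this
  refine ⟨first, ?_⟩
  -- second: B(1 - x) ≤ -log(1-α) where x = (1-α)^{1/B}
  have hx : (0 : ℝ) < (1 - α) ^ ((B : ℝ)⁻¹) := Real.rpow_pos_of_pos h1α _
  have hlog : Real.log ((1 - α) ^ ((B : ℝ)⁻¹)) ≤ (1 - α) ^ ((B : ℝ)⁻¹) - 1 :=
    Real.log_le_sub_one_of_pos hx
  rw [Real.log_rpow h1α] at hlog
  have : (B : ℝ) * (1 - (1 - α) ^ ((B : ℝ)⁻¹)) ≤ - Real.log (1 - α) := by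
    have := mul_le_mul_of_nonneg_left (by linarith : 1 - (1 - α) ^ ((B : ℝ)⁻¹) ≤ -((B : ℝ)⁻¹ * Real.log (1 - α))) hBpos.le
    calc (B : ℝ) * (1 - (1 - α) ^ ((B : ℝ)⁻¹)) ≤ (B : ℝ) * -((B : ℝ)⁻¹ * Real.log (1 - α)) := this
      _ = - Real.log (1 - α) := by field_simp
  rw [Real.log_div one_ne_zero h1α.ne', Real.log_one]
  linarith
end

section
/- (Theorem 2, first part: nontriviality of the Wilcoxon oracle threshold) Assume (B3), let n ≥ 2 be an even integer, and suppose the finite p-value range S satisfies min S = 2 · ((n/2)!)² / n! (the smallest attainable p-value of the two-sided two-sample Wilcoxon test with equal group sizes n/2). Then, for α ∈ (0,1), if n ≥ 2 log₂(m/α) + 2, the oracle threshold satisfies c(α) ≥ min S > 0; i.e., c(α) is strictly positive. -/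
noncomputable section

/-- The oracle threshold `c(α) = max {s ∈ S : Q(f(W) ≤ s) ≤ α}`, with `max ∅ := 0`. -/
def oracleOf {Ω : Type*} [MeasurableSpace Ω] (Q : MeasureTheory.Measure Ω)
    (S : Finset ℝ) (f : Ω → ℝ) (α : ℝ) : ℝ :=
  WithBot.unbotD 0 ((S.filter (fun s => (Q {w | f w ≤ s}).toReal ≤ α)).max)

open MeasureTheory

lemma two_pow_le_centralBinom (k : ℕ) : 2 ^ k ≤ Nat.centralBinom k := by
  induction k with
  | zero => simp [Nat.centralBinom]
  | succ n ih =>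
    have h := Nat.succ_mul_centralBinom_succ n
    have h2 : (n + 1) * (2 * Nat.centralBinom n) ≤ (n + 1) * Nat.centralBinom (n + 1) := by
      rw [h]
      nlinarith [Nat.centralBinom_pos n]
    have h3 : 2 * Nat.centralBinom n ≤ Nat.centralBinom (n + 1) :=
      Nat.le_of_mul_le_mul_left h2 (Nat.succ_pos n)
    calc 2 ^ (n + 1) = 2 * 2 ^ n := by ring
    _ ≤ 2 * Nat.centralBinom n := by omega
    _ ≤ _ := h3

/-- **Theorem 2, first part (nontriviality of the Wilcoxon oracle threshold).**
Under (B3), if the smallest attainable `p`-value is `min S = 2((n/2)!)²/n!` (two-sided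
two-sample Wilcoxon with equal group sizes `n/2`, `n` even) and `n ≥ 2·log₂(m/α) + 2`,
then the oracle threshold satisfies `c(α) ≥ min S > 0`. -/
theorem wilcoxon_oracle_threshold_positive
    {Ω : Type*} [MeasurableSpace Ω] (Q : Measure Ω) [IsProbabilityMeasure Q]
    {m : ℕ} (p : Fin m → Ω → ℝ) (S : Finset ℝ) (hSne : S.Nonempty)
    (hS01 : ∀ s ∈ S, 0 ≤ s ∧ s ≤ 1) (hp : ∀ j w, p j w ∈ S)
    (I : Finset (Fin m)) (hI : I.Nonempty)
    (hB3 : ∀ j ∈ I, ∀ s ∈ S, (Q {w | p j w ≤ s}).toReal = s)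
    (n : ℕ) (hn2 : 2 ≤ n) (hneven : Even n)
    (hmin : S.min' hSne
      = 2 * ((n / 2).factorial : ℝ) ^ 2 / (n.factorial : ℝ))
    (α : ℝ) (hα : α ∈ Set.Ioo (0 : ℝ) 1)
    (hcond : 2 * Real.logb 2 ((m : ℝ) / α) + 2 ≤ (n : ℝ)) :
    S.min' hSne ≤ oracleOf Q S (fun w => I.inf' hI (fun j => p j w)) α ∧
    0 < oracleOf Q S (fun w => I.inf' hI (fun j => p j w)) α := by
  obtain ⟨hα0, hα1⟩ := hα
  set s₀ := S.min' hSne with hs₀def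
  have hs₀S : s₀ ∈ S := S.min'_mem hSne
  obtain ⟨k, hk⟩ := hneven
  have hnk : n = 2 * k := by omega
  have hk1 : 1 ≤ k := by omega
  have hkn2 : n / 2 = k := by omega
  have hC : (0 : ℝ) < (Nat.centralBinom k : ℝ) := by
    exact_mod_cast Nat.centralBinom_pos k
  have hfact : (Nat.centralBinom k : ℝ) * ((k.factorial : ℝ)) ^ 2 = (n.factorial : ℝ) := by
    have h := Nat.choose_mul_factorial_mul_factorial (show k ≤ 2 * k by omega)
    have h2 : 2 * k - k = k := by omega
    rw [h2] at h
    rw [Nat.centralBinom, hnk]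
    push_cast [← h]
    ring
  have hnfpos : (0 : ℝ) < (n.factorial : ℝ) := by exact_mod_cast n.factorial_pos
  have hkfpos : (0 : ℝ) < (k.factorial : ℝ) := by exact_mod_cast k.factorial_pos
  have hs₀val : s₀ = 2 / (Nat.centralBinom k : ℝ) := by
    rw [hmin, hkn2, ← hfact]
    field_simp
  have hs₀pos : 0 < s₀ := by rw [hs₀val]; positivity
  -- m ≥ 1
  have hm1 : 1 ≤ m := hI.choose.pos
  have hmpos : (0 : ℝ) < (m : ℝ) := by exact_mod_cast hm1
  have hA : (0 : ℝ) < (m : ℝ) / α := by positivity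
  -- m * s₀ ≤ α
  have hlog : Real.logb 2 ((m : ℝ) / α) ≤ (k : ℝ) - 1 := by
    have : (n : ℝ) = 2 * k := by exact_mod_cast hnk
    linarith [hcond, this]
  have hA2 : (m : ℝ) / α ≤ (2 : ℝ) ^ ((k : ℝ) - 1) := by
    calc (m : ℝ) / α = (2 : ℝ) ^ Real.logb 2 ((m : ℝ) / α) :=
          (Real.rpow_logb two_pos (by norm_num) hA).symm
    _ ≤ _ := Real.rpow_le_rpow_of_exponent_le (by norm_num) hlog
  have hm' : (m : ℝ) ≤ α * (2 : ℝ) ^ ((k : ℝ) - 1) := by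
    rw [div_le_iff₀ hα0] at hA2
    linarith
  have hrp : (2 : ℝ) ^ ((k : ℝ) - 1) = (2 : ℝ) ^ k / 2 := by
    rw [Real.rpow_sub (by norm_num), Real.rpow_one, Real.rpow_natCast]
  have h2k : ((2 : ℝ) ^ k) ≤ (Nat.centralBinom k : ℝ) := by
    exact_mod_cast two_pow_le_centralBinom k
  have hkey : (m : ℝ) * s₀ ≤ α := by
    calc (m : ℝ) * s₀ ≤ (α * (2 : ℝ) ^ ((k : ℝ) - 1)) * s₀ :=
          mul_le_mul_of_nonneg_right hm' hs₀pos.le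
    _ = α * ((2 : ℝ) ^ k / (Nat.centralBinom k : ℝ)) := by
          rw [hrp, hs₀val]; field_simp
    _ ≤ α * 1 := by
          apply mul_le_mul_of_nonneg_left _ hα0.le
          rw [div_le_one hC]; exact h2k
    _ = α := mul_one α
  -- measure bound
  have hset : {w | I.inf' hI (fun j => p j w) ≤ s₀} = ⋃ j ∈ I, {w | p j w ≤ s₀} := by
    ext w
    simp [Finset.inf'_le_iff]
  have hbound : (Q {w | I.inf' hI (fun j => p j w) ≤ s₀}).toReal ≤ α := by
    have h1 : Q {w | I.inf' hI (fun j => p j w) ≤ s₀} ≤ ∑ j ∈ I, Q {w | p j w ≤ s₀} := by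
      rw [hset]; exact measure_biUnion_finset_le I _
    have hsum_ne : (∑ j ∈ I, Q {w | p j w ≤ s₀}) ≠ ⊤ :=
      ENNReal.sum_ne_top.2 fun j _ => measure_ne_top Q _
    have h2 := ENNReal.toReal_mono hsum_ne h1
    rw [ENNReal.toReal_sum (fun j _ => measure_ne_top Q _)] at h2
    have h3 : ∑ j ∈ I, (Q {w | p j w ≤ s₀}).toReal = I.card * s₀ := by
      rw [Finset.sum_congr rfl (fun j hj => hB3 j hj s₀ hs₀S), Finset.sum_const,
        nsmul_eq_mul]
    rw [h3] at h2
    have hcard : (I.card : ℝ) ≤ (m : ℝ) := by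
      exact_mod_cast (Finset.card_le_univ I).trans_eq (by simp)
    calc (Q {w | I.inf' hI (fun j => p j w) ≤ s₀}).toReal ≤ (I.card : ℝ) * s₀ := h2
    _ ≤ (m : ℝ) * s₀ := mul_le_mul_of_nonneg_right hcard hs₀pos.le
    _ ≤ α := hkey
  -- conclude
  set F := S.filter (fun s =>
    (Q {w | (fun w => I.inf' hI fun j => p j w) w ≤ s}).toReal ≤ α) with hF
  have hmem : s₀ ∈ F := Finset.mem_filter.2 ⟨hs₀S, hbound⟩
  have hFne : F.Nonempty := ⟨s₀, hmem⟩
  have hle : s₀ ≤ oracleOf Q S (fun w => I.inf' hI (fun j => p j w)) α := by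
    unfold oracleOf
    rw [← hF, ← Finset.coe_max' hFne, WithBot.unbotD_coe]
    exact Finset.le_max' F s₀ hmem
  exact ⟨hle, lt_of_lt_of_le hs₀pos hle⟩
end
end

section
/- (Weak FWER control of the single-step Westfall–Young procedure) Suppose the p-value functions take values in a finite set S ⊆ (0,1], and suppose the randomization hypothesis holds: for every g ∈ 𝒢, the random element gW has the same distribution under Q as W. Define the Westfall–Young threshold ĉ(α)(w) = max{ s ∈ S : P*( min_{1≤j≤m} p_j(W) ≤ s )(w) ≤ α }, with max ∅ := 0. Then for every α ∈ (0,1), Q( min_{1≤j≤m} p_j(W) ≤ ĉ(α)(W) ) ≤ α. -/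
noncomputable section

/-- The permutation probability `P*(E)(w) = |G|⁻¹ ∑_{g ∈ G} 1{g w ∈ E}`. -/
def PstarOf {Ω : Type*} [MeasurableSpace Ω] (G : Finset (Ω ≃ᵐ Ω)) (E : Set Ω)
    (w : Ω) : ℝ :=
  (G.card : ℝ)⁻¹ * ∑ g ∈ G, E.indicator (fun _ => (1 : ℝ)) (g w)

/-- The single-step Westfall–Young threshold
`ĉ(α)(w) = max {s ∈ S : P*(min_{1≤j≤m} p_j(W) ≤ s)(w) ≤ α}`, with `max ∅ := 0`. -/
def wyOf {Ω : Type*} [MeasurableSpace Ω] (G : Finset (Ω ≃ᵐ Ω)) (S : Finset ℝ)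
    (f : Ω → ℝ) (α : ℝ) (w : Ω) : ℝ :=
  WithBot.unbotD 0 ((S.filter (fun s => PstarOf G {w' | f w' ≤ s} w ≤ α)).max)

open MeasureTheory

namespace WYaux

variable {Ω : Type*} [MeasurableSpace Ω]

lemma pstar_eq (G : Finset (Ω ≃ᵐ Ω)) (E : Set Ω) :
    PstarOf G E = fun w => (G.card : ℝ)⁻¹ *
      ∑ g ∈ G, (⇑g ⁻¹' E).indicator (fun _ => (1 : ℝ)) w := rfl

lemma pstar_measurable (G : Finset (Ω ≃ᵐ Ω)) {E : Set Ω} (hE : MeasurableSet E) :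
    Measurable (PstarOf G E) := by
  rw [pstar_eq]
  exact measurable_const.mul (Finset.measurable_sum _ fun g _ =>
    measurable_const.indicator (hE.preimage g.measurable))

lemma pstar_mono (G : Finset (Ω ≃ᵐ Ω)) {E F : Set Ω} (h : E ⊆ F) (w : Ω) :
    PstarOf G E w ≤ PstarOf G F w := by
  unfold PstarOf
  refine mul_le_mul_of_nonneg_left (Finset.sum_le_sum fun g _ => ?_) (by positivity)
  exact Set.indicator_le_indicator_of_subset h (fun _ => zero_le_one) _

lemma pstar_inv (G : Finset (Ω ≃ᵐ Ω))
    (hG_mul : ∀ g ∈ G, ∀ g' ∈ G, g.trans g' ∈ G)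
    (hG_inv : ∀ g ∈ G, g.symm ∈ G)
    {g : Ω ≃ᵐ Ω} (hg : g ∈ G) (E : Set Ω) (w : Ω) :
    PstarOf G E (g w) = PstarOf G E w := by
  unfold PstarOf
  congr 1
  refine Finset.sum_bij' (fun g' _ => g.trans g') (fun h _ => g.symm.trans h)
    (fun g' hg' => hG_mul g hg g' hg') (fun h hh => hG_mul g.symm (hG_inv g hg) h hh)
    ?_ ?_ ?_
  · intro g' hg'
    ext x
    simp [MeasurableEquiv.trans_apply]
  · intro h hh
    ext x
    simp [MeasurableEquiv.trans_apply]
  · intro g' hg'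
    simp [MeasurableEquiv.trans_apply]

lemma wy_inv (G : Finset (Ω ≃ᵐ Ω)) (S : Finset ℝ) (f : Ω → ℝ) (α : ℝ)
    (hG_mul : ∀ g ∈ G, ∀ g' ∈ G, g.trans g' ∈ G)
    (hG_inv : ∀ g ∈ G, g.symm ∈ G)
    {g : Ω ≃ᵐ Ω} (hg : g ∈ G) (w : Ω) :
    wyOf G S f α (g w) = wyOf G S f α w := by
  unfold wyOf
  congr 1
  congr 1
  exact Finset.filter_congr fun s _ => by
    rw [pstar_inv G hG_mul hG_inv hg]

end WYaux

open WYaux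

/-- **Weak FWER control of the single-step Westfall–Young procedure.** If the `p`-values
take values in a finite `S ⊆ (0,1]` and the randomization hypothesis holds (`gW ∼ W`
under `Q` for every `g` in the finite group `𝒢`), then
`Q(min_{1≤j≤m} p_j(W) ≤ ĉ(α)(W)) ≤ α` for every `α ∈ (0,1)`. -/
theorem westfall_young_weak_fwer_control
    {Ω : Type*} [MeasurableSpace Ω] (Q : Measure Ω) [IsProbabilityMeasure Q]
    {m : ℕ} (hm : 0 < m) (p : Fin m → Ω → ℝ) (hpm : ∀ j, Measurable (p j))
    (S : Finset ℝ) (hS01 : ∀ s ∈ S, 0 < s ∧ s ≤ 1) (hp : ∀ j w, p j w ∈ S)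
    (G : Finset (Ω ≃ᵐ Ω))
    (hG_one : MeasurableEquiv.refl Ω ∈ G)
    (hG_mul : ∀ g ∈ G, ∀ g' ∈ G, g.trans g' ∈ G)
    (hG_inv : ∀ g ∈ G, g.symm ∈ G)
    (hrand : ∀ g ∈ G, Measure.map (g : Ω ≃ᵐ Ω) Q = Q)
    (α : ℝ) (hα : α ∈ Set.Ioo (0 : ℝ) 1) :
    (Q {w | Finset.univ.inf' ⟨⟨0, hm⟩, Finset.mem_univ _⟩ (fun j => p j w)
        ≤ wyOf G S (fun w' => Finset.univ.inf' ⟨⟨0, hm⟩, Finset.mem_univ _⟩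
            (fun j => p j w')) α w}).toReal ≤ α := by
  classical
  obtain ⟨hα0, hα1⟩ := hα
  set f : Ω → ℝ := fun w' => Finset.univ.inf' ⟨⟨0, hm⟩, Finset.mem_univ _⟩
      (fun j => p j w') with hf
  set c : Ω → ℝ := wyOf G S f α with hc
  set A : Set Ω := {w | f w ≤ c w} with hA
  show (Q A).toReal ≤ α
  -- the filter appearing in the definition of `c`
  set T : Ω → Finset ℝ :=
    fun w => S.filter (fun s => PstarOf G {w' | f w' ≤ s} w ≤ α) with hT
  have hc_eq : ∀ w, c w = WithBot.unbotD 0 ((T w).max) := fun w => rfl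
  have hc_max' : ∀ w (h : (T w).Nonempty), c w = (T w).max' h := by
    intro w h
    rw [hc_eq w, ← Finset.coe_max' h, WithBot.unbotD_coe]
  -- basic facts about f
  have hfS : ∀ w, f w ∈ S := by
    intro w
    obtain ⟨j, -, hj⟩ := Finset.exists_mem_eq_inf'
      (⟨⟨0, hm⟩, Finset.mem_univ _⟩ : (Finset.univ : Finset (Fin m)).Nonempty)
      (fun j => p j w)
    have hj' : f w = p j w := hj
    rw [hj']; exact hp j w
  have hfpos : ∀ w, 0 < f w := fun w => (hS01 _ (hfS w)).1
  have hfle : ∀ s : ℝ, {w | f w ≤ s} = ⋃ j : Fin m, {w | p j w ≤ s} := by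
    intro s; ext w; simp [hf, Finset.inf'_le_iff]
    exact (Finset.inf'_le_iff (H := _)).trans (by simp)
  have hEmeas : ∀ s : ℝ, MeasurableSet {w | f w ≤ s} := by
    intro s
    rw [hfle]
    exact MeasurableSet.iUnion fun j => measurableSet_le (hpm j) measurable_const
  have hflt : ∀ s : ℝ, MeasurableSet {w | f w < s} := by
    intro s
    have : {w | f w < s} = ⋃ j : Fin m, {w | p j w < s} := by
      ext w; simp [hf, Finset.inf'_lt_iff]
      exact (Finset.inf'_lt_iff (H := _)).trans (by simp)
    rw [this]
    exact MeasurableSet.iUnion fun j => measurableSet_lt (hpm j) measurable_const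
  -- characterization of the rejection event
  have hchar : ∀ w, (f w ≤ c w ↔ PstarOf G {w' | f w' ≤ f w} w ≤ α) := by
    intro w
    constructor
    · intro h
      rcases (T w).eq_empty_or_nonempty with hTe | hTn
      · exfalso
        have h0 : c w = 0 := by rw [hc_eq w, hTe]; simp
        rw [h0] at h
        exact absurd h (not_le.mpr (hfpos w))
      · have hmem : c w ∈ T w := by
          rw [hc_max' w hTn]; exact Finset.max'_mem _ hTn
        have hcb := (Finset.mem_filter.mp hmem).2
        refine le_trans (pstar_mono G ?_ w) hcb
        intro w' hw'
        exact le_trans hw' h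
    · intro h
      have hmem : f w ∈ T w := Finset.mem_filter.mpr ⟨hfS w, h⟩
      have hTn : (T w).Nonempty := ⟨_, hmem⟩
      rw [hc_max' w hTn]
      exact Finset.le_max' _ _ hmem
  -- measurability of A
  have hAmeas : MeasurableSet A := by
    have hrepr : A = ⋃ s ∈ S, (({w | f w ≤ s} \ {w | f w < s}) ∩
        {w | PstarOf G {w' | f w' ≤ s} w ≤ α}) := by
      ext w
      simp only [hA, Set.mem_iUnion, Set.mem_inter_iff, Set.mem_diff,
        Set.mem_setOf_eq, exists_prop]
      constructor
      · intro hw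
        exact ⟨f w, hfS w, ⟨le_rfl, lt_irrefl _⟩, (hchar w).mp hw⟩
      · rintro ⟨s, hs, ⟨hle, hnlt⟩, hP⟩
        have hfs : f w = s := le_antisymm hle (not_lt.mp hnlt)
        exact (hchar w).mpr (hfs ▸ hP)
    rw [hrepr]
    exact MeasurableSet.biUnion S.countable_toSet fun s _ =>
      (((hEmeas s).diff (hflt s)).inter
        (measurableSet_le (pstar_measurable G (hEmeas s)) measurable_const))
  -- pointwise bound on the permutation probability of A
  have hpoint : ∀ w, PstarOf G A w ≤ α := by
    intro w
    have h1 : PstarOf G A w = PstarOf G {w' | f w' ≤ c w} w := by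
      unfold PstarOf
      refine congrArg _ (Finset.sum_congr rfl fun g hg => ?_)
      have hcg : c (g w) = c w := wy_inv G S f α hG_mul hG_inv hg w
      simp only [Set.indicator_apply]
      exact if_congr (by simp only [hA, Set.mem_setOf_eq, hcg]) rfl rfl
    rw [h1]
    rcases (T w).eq_empty_or_nonempty with hTe | hTn
    · have hc0 : c w = 0 := by rw [hc_eq w, hTe]; simp
      rw [hc0]
      have hzero : {w' | f w' ≤ (0:ℝ)} = (∅ : Set Ω) := by
        ext w'; simp [not_le.mpr (hfpos w')]
      rw [hzero]
      have : PstarOf G (∅ : Set Ω) w = 0 := by simp [PstarOf]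
      rw [this]; exact hα0.le
    · have hmem : c w ∈ T w := by
        rw [hc_max' w hTn]; exact Finset.max'_mem _ hTn
      exact (Finset.mem_filter.mp hmem).2
  -- integration
  have hcard : (0:ℝ) < G.card := by
    exact_mod_cast Finset.card_pos.mpr ⟨_, hG_one⟩
  have hPre : ∀ g : Ω ≃ᵐ Ω, g ∈ G → Q (⇑g ⁻¹' A) = Q A := by
    intro g hg
    rw [← Measure.map_apply g.measurable hAmeas, hrand g hg]
  have hint_ind : ∀ s : Set Ω, MeasurableSet s →
      Integrable (s.indicator (fun _ => (1:ℝ))) Q :=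
    fun s hs => (integrable_const (1:ℝ)).indicator hs
  have hPA_int : Integrable (PstarOf G A) Q := by
    rw [pstar_eq]
    exact (integrable_finset_sum _ fun g _ =>
      hint_ind _ (hAmeas.preimage g.measurable)).const_mul _
  have hterm : ∀ g : Ω ≃ᵐ Ω, g ∈ G →
      ∫ w, (⇑g ⁻¹' A).indicator (fun _ => (1:ℝ)) w ∂Q = (Q A).toReal := by
    intro g hg
    rw [integral_indicator_const _ (hAmeas.preimage g.measurable), measureReal_def, hPre g hg,
      smul_eq_mul, mul_one]
  have key : ∫ w, PstarOf G A w ∂Q = (Q A).toReal := by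
    calc ∫ w, PstarOf G A w ∂Q
        = ∫ w, (G.card:ℝ)⁻¹ * ∑ g ∈ G, (⇑g ⁻¹' A).indicator (fun _ => (1:ℝ)) w ∂Q := by
          simp only [pstar_eq]
      _ = (G.card:ℝ)⁻¹ * ∫ w, ∑ g ∈ G, (⇑g ⁻¹' A).indicator (fun _ => (1:ℝ)) w ∂Q :=
          integral_const_mul _ _
      _ = (G.card:ℝ)⁻¹ * ∑ g ∈ G, ∫ w, (⇑g ⁻¹' A).indicator (fun _ => (1:ℝ)) w ∂Q := by
          rw [integral_finset_sum _ fun g _ => hint_ind _ (hAmeas.preimage g.measurable)]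
      _ = (G.card:ℝ)⁻¹ * ∑ g ∈ G, (Q A).toReal := by
          rw [Finset.sum_congr rfl hterm]
      _ = (Q A).toReal := by
          rw [Finset.sum_const, nsmul_eq_mul, inv_mul_cancel_left₀ hcard.ne']
  have final : ∫ w, PstarOf G A w ∂Q ≤ ∫ _, α ∂Q :=
    integral_mono hPA_int (integrable_const α) hpoint
  rw [integral_const] at final
  simp only [probReal_univ, one_smul] at final
  rw [← key]
  exact final
end
end
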